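/- Let f, g, h : ℝ → ℝ be differentiable functions satisfying f' = g·h, g' = -f·h, h' = -f on ℝ. Then for all t ∈ ℝ: f(t) = -h'(t) and g(t) = (h(t)² - h(0)²)/2 + g(0); equivalently, the quantity 2g(t) - h(t)² is constant in t. Moreover f(t)² + g(t)² is constant in t. -/
import Mathlib

/-- Structural reduction for the ODE system `f' = gh`, `g' = -fh`, `h' = -f`:
`f = -h'`, `g = (h² - h(0)²)/2 + g(0)`, and `2g - h²` and `f² + g²` are conserved. -/
theorem stmt_17 (f g h : ℝ → ℝ)
    (hf : ∀ t, HasDerivAt f (g t * h t) t)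
    (hg : ∀ t, HasDerivAt g (-(f t * h t)) t)
    (hh : ∀ t, HasDerivAt h (-(f t)) t) :
    ∀ t : ℝ,
      f t = -deriv h t ∧
      g t = (h t ^ 2 - h 0 ^ 2) / 2 + g 0 ∧
      2 * g t - h t ^ 2 = 2 * g 0 - h 0 ^ 2 ∧
      f t ^ 2 + g t ^ 2 = f 0 ^ 2 + g 0 ^ 2 := by
  have key1 : ∀ t, 2 * g t - h t ^ 2 = 2 * g 0 - h 0 ^ 2 := by
    have : ∀ t, (fun t => 2 * g t - h t ^ 2) t = (fun t => 2 * g t - h t ^ 2) 0 := by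
      intro t
      refine is_const_of_deriv_eq_zero (𝕜 := ℝ) (f := fun t => 2 * g t - h t ^ 2) ?_ ?_ t 0
      · intro x
        exact (((hg x).const_mul 2).sub ((hh x).pow 2)).differentiableAt
      · intro x
        have : HasDerivAt (fun t => 2 * g t - h t ^ 2)
            (2 * (-(f x * h x)) - 2 * h x ^ (2-1) * (-(f x))) x :=
          ((hg x).const_mul 2).sub ((hh x).pow 2)
        rw [this.deriv]; ring
    exact fun t => this t
  have key2 : ∀ t, f t ^ 2 + g t ^ 2 = f 0 ^ 2 + g 0 ^ 2 := by
    have : ∀ t, (fun t => f t ^ 2 + g t ^ 2) t = (fun t => f t ^ 2 + g t ^ 2) 0 := by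
      intro t
      refine is_const_of_deriv_eq_zero (𝕜 := ℝ) (f := fun t => f t ^ 2 + g t ^ 2) ?_ ?_ t 0
      · intro x
        exact (((hf x).pow 2).add ((hg x).pow 2)).differentiableAt
      · intro x
        have : HasDerivAt (fun t => f t ^ 2 + g t ^ 2)
            (2 * f x ^ (2-1) * (g x * h x) + 2 * g x ^ (2-1) * (-(f x * h x))) x :=
          ((hf x).pow 2).add ((hg x).pow 2)
        rw [this.deriv]; ring
    exact fun t => this t
  intro t
  refine ⟨?_, ?_, key1 t, key2 t⟩
  · rw [(hh t).deriv]; ring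
  · have := key1 t; linarith
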